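/- Let (x_n) be a DR sequence with respect to (A, B), B = {b_1, b_2}, and let (l_{1,n}) and (l_{2,n}) be nondecreasing sequences of natural numbers with ⟨x_n, u⟩ = ⟨x_0, u⟩ + l_{1,n}·⟨b_1, u⟩ + l_{2,n}·⟨b_2, u⟩ and l_{1,n} + l_{2,n} = n for all n. Then, as n → +∞, l_{1,n}/n → ⟨b_2, u⟩ / ⟨b_2 − b_1, u⟩ ∈ (0, 1) and l_{2,n}/n → ⟨b_1, u⟩ / ⟨b_1 − b_2, u⟩ ∈ (0, 1). -/

import Mathlib

open Filter
open scoped RealInnerProductSpace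

/-- If `l₁, l₂ : ℕ → ℕ` are nondecreasing with
`⟪x n, u⟫ = ⟪x 0, u⟫ + l₁ n ⟪b₁,u⟫ + l₂ n ⟪b₂,u⟫` and `l₁ n + l₂ n = n` for a DR sequence
`(x n)`, then `l₁ n / n → ⟪b₂,u⟫/⟪b₂-b₁,u⟫ ∈ (0,1)` and
`l₂ n / n → ⟪b₁,u⟫/⟪b₁-b₂,u⟫ ∈ (0,1)`. -/
theorem dr_hyperplane_doubleton_stmt_8
    {X : Type*} [NormedAddCommGroup X] [InnerProductSpace ℝ X] [FiniteDimensional ℝ X]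
    (u : X) (hu : ‖u‖ = 1)
    (b₁ b₂ : X) (hb₁ : ⟪b₁, u⟫ < 0) (hb₂ : 0 < ⟪b₂, u⟫)
    (x : ℕ → X)
    (hx : ∀ n : ℕ, ∃ b ∈ ({b₁, b₂} : Set X),
      (∀ b' ∈ ({b₁, b₂} : Set X),
        ‖(x n - (2 * ⟪x n, u⟫) • u) - b‖ ≤ ‖(x n - (2 * ⟪x n, u⟫) • u) - b'‖) ∧
      x (n + 1) = ⟪x n, u⟫ • u + b)
    (l₁ l₂ : ℕ → ℕ) (hl₁ : Monotone l₁) (hl₂ : Monotone l₂)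
    (hl : ∀ n : ℕ, ⟪x n, u⟫ = ⟪x 0, u⟫ + (l₁ n : ℝ) * ⟪b₁, u⟫ + (l₂ n : ℝ) * ⟪b₂, u⟫ ∧
      l₁ n + l₂ n = n) :
    ⟪b₂, u⟫ / ⟪b₂ - b₁, u⟫ ∈ Set.Ioo (0 : ℝ) 1 ∧
    ⟪b₁, u⟫ / ⟪b₁ - b₂, u⟫ ∈ Set.Ioo (0 : ℝ) 1 ∧
    Tendsto (fun n : ℕ => (l₁ n : ℝ) / n) atTop (nhds (⟪b₂, u⟫ / ⟪b₂ - b₁, u⟫)) ∧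
    Tendsto (fun n : ℕ => (l₂ n : ℝ) / n) atTop (nhds (⟪b₁, u⟫ / ⟪b₁ - b₂, u⟫)) := by
  have huu : ⟪u, u⟫ = (1 : ℝ) := by
    rw [real_inner_self_eq_norm_mul_norm, hu]; norm_num
  have hβ : (0 : ℝ) < ⟪b₂, u⟫ - ⟪b₁, u⟫ := by linarith
  have hβsub : ⟪b₂ - b₁, u⟫ = ⟪b₂, u⟫ - ⟪b₁, u⟫ := by rw [inner_sub_left]
  have hβsub' : ⟪b₁ - b₂, u⟫ = ⟪b₁, u⟫ - ⟪b₂, u⟫ := by rw [inner_sub_left]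
  -- the two Ioo memberships
  have mem1 : ⟪b₂, u⟫ / ⟪b₂ - b₁, u⟫ ∈ Set.Ioo (0 : ℝ) 1 := by
    rw [hβsub]
    exact ⟨div_pos hb₂ hβ, (div_lt_one hβ).2 (by linarith)⟩
  have heq2 : ⟪b₁, u⟫ / (⟪b₁, u⟫ - ⟪b₂, u⟫) = (-⟪b₁, u⟫) / (⟪b₂, u⟫ - ⟪b₁, u⟫) := by
    rw [div_eq_div_iff (by linarith) (by linarith)]; ring
  have mem2 : ⟪b₁, u⟫ / ⟪b₁ - b₂, u⟫ ∈ Set.Ioo (0 : ℝ) 1 := by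
    rw [hβsub', heq2]
    exact ⟨div_pos (by linarith) hβ, (div_lt_one hβ).2 (by linarith)⟩
  -- step lemma
  have hstep : ∀ n : ℕ, ∃ b ∈ ({b₁, b₂} : Set X),
      (∀ b' ∈ ({b₁, b₂} : Set X),
        ‖(x n - (2 * ⟪x n, u⟫) • u) - b‖ ≤ ‖(x n - (2 * ⟪x n, u⟫) • u) - b'‖) ∧
      x (n + 1) = ⟪x n, u⟫ • u + b ∧ ⟪x (n + 1), u⟫ = ⟪x n, u⟫ + ⟪b, u⟫ := by
    intro n
    obtain ⟨b, hbB, hmin, hxeq⟩ := hx n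
    refine ⟨b, hbB, hmin, hxeq, ?_⟩
    rw [hxeq, inner_add_left, real_inner_smul_left, huu]; ring
  -- constants
  set E : X → ℝ := fun b =>
    2 * ⟪b, u⟫ * (⟪b₁, u⟫ - ⟪b₂, u⟫) - 2 * (⟪b, b₁⟫ - ⟪b, b₂⟫) + ‖b₁‖ ^ 2 - ‖b₂‖ ^ 2 with hE
  set K : ℝ := max |E b₁| |E b₂| with hKdef
  have hK0 : (0 : ℝ) ≤ K := le_trans (abs_nonneg _) (le_max_left _ _)
  set M : ℝ := (K + 1) / (2 * (⟪b₂, u⟫ - ⟪b₁, u⟫)) with hMdef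
  have hM0 : 0 < M := div_pos (by linarith) (by linarith)
  have hMK : 2 * M * (⟪b₂, u⟫ - ⟪b₁, u⟫) = K + 1 := by
    rw [hMdef]; field_simp
  -- key selection lemma
  have key : ∀ n : ℕ,
      (M < ⟪x (n + 1), u⟫ → ⟪x (n + 2), u⟫ = ⟪x (n + 1), u⟫ + ⟪b₁, u⟫) ∧
      (⟪x (n + 1), u⟫ < -M → ⟪x (n + 2), u⟫ = ⟪x (n + 1), u⟫ + ⟪b₂, u⟫) := by
    intro n
    obtain ⟨bp, hbpB, -, hxp, hsp⟩ := hstep n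
    obtain ⟨b, hbB, hmin, -, hsq⟩ := hstep (n + 1)
    set r := x (n + 1) - (2 * ⟪x (n + 1), u⟫) • u with hr
    have hxin : ∀ y : X, ⟪x (n + 1), y⟫ = ⟪x n, u⟫ * ⟪u, y⟫ + ⟪bp, y⟫ := by
      intro y; rw [hxp, inner_add_left, real_inner_smul_left]
    have hrins : ∀ y : X, ⟪r, y⟫ = ⟪x (n + 1), y⟫ - 2 * ⟪x (n + 1), u⟫ * ⟪u, y⟫ := by
      intro y; rw [hr, inner_sub_left, real_inner_smul_left]
    have hsn : ⟪x n, u⟫ = ⟪x (n + 1), u⟫ - ⟪bp, u⟫ := by linarith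
    have hdiff : ‖r - b₁‖ ^ 2 - ‖r - b₂‖ ^ 2
        = -2 * ⟪x (n + 1), u⟫ * (⟪b₂, u⟫ - ⟪b₁, u⟫) + E bp := by
      simp only [hE]
      rw [norm_sub_sq_real r b₁, norm_sub_sq_real r b₂, hrins b₁, hrins b₂, hxin b₁, hxin b₂,
        hsn, real_inner_comm u b₁, real_inner_comm u b₂]
      ring
    have hEK : |E bp| ≤ K := by
      simp only [Set.mem_insert_iff, Set.mem_singleton_iff] at hbpB
      rcases hbpB with h | h
      · rw [h]; exact le_max_left _ _
      · rw [h]; exact le_max_right _ _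
    simp only [Set.mem_insert_iff, Set.mem_singleton_iff] at hbB
    constructor
    · intro hMlt
      have hsq2 : ‖r - b₁‖ ^ 2 < ‖r - b₂‖ ^ 2 := by
        nlinarith [mul_lt_mul_of_pos_right hMlt hβ, (abs_le.1 hEK).2]
      have hlt : ‖r - b₁‖ < ‖r - b₂‖ := lt_of_pow_lt_pow_left₀ 2 (norm_nonneg _) hsq2
      have hb : b = b₁ := by
        rcases hbB with h | h
        · exact h
        · exfalso
          have := hmin b₁ (Set.mem_insert _ _)
          rw [h] at this
          exact absurd this (not_le.2 hlt)
      rw [hsq, hb]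
    · intro hMlt
      have hsq2 : ‖r - b₂‖ ^ 2 < ‖r - b₁‖ ^ 2 := by
        nlinarith [mul_lt_mul_of_pos_right hMlt hβ, (abs_le.1 hEK).1]
      have hlt : ‖r - b₂‖ < ‖r - b₁‖ := lt_of_pow_lt_pow_left₀ 2 (norm_nonneg _) hsq2
      have hb : b = b₂ := by
        rcases hbB with h | h
        · exfalso
          have := hmin b₂ (Set.mem_insert_of_mem _ rfl)
          rw [h] at this
          exact absurd this (not_le.2 hlt)
        · exact h
      rw [hsq, hb]
  -- boundedness
  set M' : ℝ := max |⟪x 1, u⟫| (M + |⟪b₁, u⟫| + ⟪b₂, u⟫) with hM'def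
  have hM'2 : M + |⟪b₁, u⟫| + ⟪b₂, u⟫ ≤ M' := le_max_right _ _
  have habs : ∀ n : ℕ, |⟪x (n + 1), u⟫| ≤ M' := by
    intro n
    induction n with
    | zero => exact le_max_left _ _
    | succ m ih =>
      obtain ⟨h1, h2⟩ := key m
      rw [abs_le] at ih
      rcases lt_or_ge M ⟪x (m + 1), u⟫ with h | h
      · rw [h1 h, abs_le]
        constructor
        · have := neg_abs_le ⟪b₁, u⟫
          linarith [hM0, hb₂.le, abs_nonneg ⟪b₁, u⟫]
        · linarith [ih.2]
      rcases lt_or_ge ⟪x (m + 1), u⟫ (-M) with h' | h'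
      · rw [h2 h', abs_le]
        constructor
        · linarith [ih.1]
        · linarith [hM0, abs_nonneg ⟪b₁, u⟫]
      · obtain ⟨b, hbB, -, -, hsq⟩ := hstep (m + 1)
        rw [hsq, abs_le]
        simp only [Set.mem_insert_iff, Set.mem_singleton_iff] at hbB
        have hle := le_abs_self ⟪b₁, u⟫
        have hge := neg_abs_le ⟪b₁, u⟫
        rcases hbB with h4 | h4 <;> rw [h4] <;>
          exact ⟨by linarith [hb₂.le], by linarith [hb₂.le]⟩
  -- (s n - s 0)/n → 0
  set C : ℝ := M' + |⟪x 0, u⟫| with hCdef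
  have hC : ∀ n : ℕ, |⟪x n, u⟫ - ⟪x 0, u⟫| ≤ C := by
    intro n
    cases n with
    | zero =>
      have hM'0 : (0 : ℝ) ≤ M' := le_trans (abs_nonneg _) (le_max_left _ _)
      simp only [sub_self, abs_zero, hCdef]
      linarith [abs_nonneg ⟪x 0, u⟫]
    | succ m =>
      calc |⟪x (m + 1), u⟫ - ⟪x 0, u⟫| ≤ |⟪x (m + 1), u⟫| + |⟪x 0, u⟫| := abs_sub _ _
        _ ≤ C := by rw [hCdef]; linarith [habs m]
  have h0 : Tendsto (fun n : ℕ => (⟪x n, u⟫ - ⟪x 0, u⟫) / n) atTop (nhds 0) := by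
    apply squeeze_zero_norm ?_ (tendsto_const_div_atTop_nhds_zero_nat C)
    intro n
    rw [Real.norm_eq_abs, abs_div, Nat.abs_cast]
    gcongr
    exact hC n
  -- limits
  have hne : ⟪b₁, u⟫ - ⟪b₂, u⟫ ≠ 0 := by linarith
  have hne' : ⟪b₂, u⟫ - ⟪b₁, u⟫ ≠ 0 := by linarith
  have hlim1 : Tendsto (fun n : ℕ =>
      ((⟪x n, u⟫ - ⟪x 0, u⟫) / n - ⟪b₂, u⟫) / (⟪b₁, u⟫ - ⟪b₂, u⟫)) atTop
      (nhds ((0 - ⟪b₂, u⟫) / (⟪b₁, u⟫ - ⟪b₂, u⟫))) := (h0.sub_const _).div_const _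
  have hlim2 : Tendsto (fun n : ℕ =>
      ((⟪x n, u⟫ - ⟪x 0, u⟫) / n - ⟪b₁, u⟫) / (⟪b₂, u⟫ - ⟪b₁, u⟫)) atTop
      (nhds ((0 - ⟪b₁, u⟫) / (⟪b₂, u⟫ - ⟪b₁, u⟫))) := (h0.sub_const _).div_const _
  have heqv1 : (0 - ⟪b₂, u⟫) / (⟪b₁, u⟫ - ⟪b₂, u⟫) = ⟪b₂, u⟫ / ⟪b₂ - b₁, u⟫ := by
    rw [hβsub, div_eq_div_iff hne hne']; ring
  have heqv2 : (0 - ⟪b₁, u⟫) / (⟪b₂, u⟫ - ⟪b₁, u⟫) = ⟪b₁, u⟫ / ⟪b₁ - b₂, u⟫ := by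
    rw [hβsub', div_eq_div_iff hne' hne]; ring
  have hcong1 : (fun n : ℕ => ((⟪x n, u⟫ - ⟪x 0, u⟫) / n - ⟪b₂, u⟫) / (⟪b₁, u⟫ - ⟪b₂, u⟫))
      =ᶠ[atTop] (fun n : ℕ => (l₁ n : ℝ) / n) := by
    filter_upwards [eventually_gt_atTop 0] with n hn
    have hn' : (n : ℝ) ≠ 0 := Nat.cast_ne_zero.2 hn.ne'
    obtain ⟨h1, h2⟩ := hl n
    have h2' : (l₁ n : ℝ) + (l₂ n : ℝ) = (n : ℝ) := by exact_mod_cast h2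
    rw [h1]
    field_simp
    linear_combination ⟪b₂, u⟫ * h2'
  have hcong2 : (fun n : ℕ => ((⟪x n, u⟫ - ⟪x 0, u⟫) / n - ⟪b₁, u⟫) / (⟪b₂, u⟫ - ⟪b₁, u⟫))
      =ᶠ[atTop] (fun n : ℕ => (l₂ n : ℝ) / n) := by
    filter_upwards [eventually_gt_atTop 0] with n hn
    have hn' : (n : ℝ) ≠ 0 := Nat.cast_ne_zero.2 hn.ne'
    obtain ⟨h1, h2⟩ := hl n
    have h2' : (l₁ n : ℝ) + (l₂ n : ℝ) = (n : ℝ) := by exact_mod_cast h2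
    rw [h1]
    field_simp
    linear_combination ⟪b₁, u⟫ * h2'
  refine ⟨mem1, mem2, ?_, ?_⟩
  · exact (heqv1 ▸ hlim1).congr' hcong1
  · exact (heqv2 ▸ hlim2).congr' hcong2
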